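/- Let F be a finite nonempty set of cardinality n and σ : F → F a map. For each a ∈ F, let (k_a, l_a) be the tail length and cycle length of σ at a, and set K = max_{a∈F} k_a and L = lcm_{a∈F} l_a. Then K + α(L) ≤ n, where α(L) is the largest prime power dividing L (with α(1) = 1). -/

import Mathlib

/-- The tail length of `σ` at `a`: the least `k` admitting some positive `l`
with `σ^[k+l] a = σ^[k] a`. -/
noncomputable def tailLength {F : Type*} (σ : F → F) (a : F) : ℕ :=
  sInf {k : ℕ | ∃ l : ℕ, 0 < l ∧ σ^[k + l] a = σ^[k] a}

/-- The cycle length of `σ` at `a`: the least positive `l` admitting some `k`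
with `σ^[k+l] a = σ^[k] a`. -/
noncomputable def cycleLength {F : Type*} (σ : F → F) (a : F) : ℕ :=
  sInf {l : ℕ | 0 < l ∧ ∃ k : ℕ, σ^[k + l] a = σ^[k] a}

/-- `alpha n` is the largest prime power dividing `n`, with `alpha 1 = 1`. -/
noncomputable def alpha (n : ℕ) : ℕ :=
  sSup {m : ℕ | (m = 1 ∨ IsPrimePow m) ∧ m ∣ n}

section Aux

variable {F : Type*} [Fintype F] (σ : F → F) (a : F)

lemma aux_tail_nonempty : {k : ℕ | ∃ l : ℕ, 0 < l ∧ σ^[k + l] a = σ^[k] a}.Nonempty := by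
  obtain ⟨i, j, hne, h⟩ := Finite.exists_ne_map_eq_of_infinite (fun n : ℕ => σ^[n] a)
  rcases hne.lt_or_gt with h' | h'
  · exact ⟨i, j - i, by omega, by rw [show i + (j - i) = j by omega]; exact h.symm⟩
  · exact ⟨j, i - j, by omega, by rw [show j + (i - j) = i by omega]; exact h⟩

lemma aux_cycle_nonempty : {l : ℕ | 0 < l ∧ ∃ k : ℕ, σ^[k + l] a = σ^[k] a}.Nonempty := by
  obtain ⟨k, l, hl, h⟩ := aux_tail_nonempty σ a
  exact ⟨l, hl, k, h⟩

lemma aux_shift {k l : ℕ} (h : σ^[k + l] a = σ^[k] a) (j : ℕ) :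
    σ^[k + j + l] a = σ^[k + j] a := by
  have := congrArg (σ^[j]) h
  rwa [← Function.iterate_add_apply, ← Function.iterate_add_apply,
    show j + (k + l) = k + j + l by ring, show j + k = k + j by ring] at this

/-- Key lemma: the pair `(tailLength, cycleLength)` itself works. -/
lemma aux_key : 0 < cycleLength σ a ∧
    σ^[tailLength σ a + cycleLength σ a] a = σ^[tailLength σ a] a := by
  set k := tailLength σ a with hk
  obtain ⟨l1, hl1, h1⟩ : ∃ l : ℕ, 0 < l ∧ σ^[k + l] a = σ^[k] a :=
    Nat.sInf_mem (aux_tail_nonempty σ a)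
  set x := σ^[k] a with hxdef
  have hx : Function.IsPeriodicPt σ l1 x := by
    show σ^[l1] (σ^[k] a) = σ^[k] a
    rw [← Function.iterate_add_apply, show l1 + k = k + l1 by ring]; exact h1
  have hxp : x ∈ Function.periodicPts σ := ⟨l1, hl1, hx⟩
  set m := Function.minimalPeriod σ x with hm
  have hmper : Function.IsPeriodicPt σ m x := Function.isPeriodicPt_minimalPeriod σ x
  have hmpos : 0 < m := hx.minimalPeriod_pos hl1
  have hkm : σ^[k + m] a = σ^[k] a := by
    rw [show k + m = m + k by ring, Function.iterate_add_apply]; exact hmper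
  have hcm : cycleLength σ a ≤ m := Nat.sInf_le ⟨hmpos, k, hkm⟩
  obtain ⟨hlpos, k2, hk2⟩ :
      0 < cycleLength σ a ∧ ∃ k' : ℕ, σ^[k' + cycleLength σ a] a = σ^[k'] a :=
    Nat.sInf_mem (aux_cycle_nonempty σ a)
  set l := cycleLength σ a with hl
  have h2' : σ^[max k k2 + l] a = σ^[max k k2] a := by
    have := aux_shift σ a hk2 (max k k2 - k2)
    rwa [show k2 + (max k k2 - k2) = max k k2 by omega] at this
  have hper2 : Function.IsPeriodicPt σ l (σ^[max k k2] a) := by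
    show σ^[l] (σ^[max k k2] a) = σ^[max k k2] a
    rw [← Function.iterate_add_apply, show l + max k k2 = max k k2 + l by ring]; exact h2'
  have hmin : Function.minimalPeriod σ (σ^[max k k2] a) = m := by
    rw [show max k k2 = (max k k2 - k) + k by omega, Function.iterate_add_apply]
    exact Function.minimalPeriod_apply_iterate hxp _
  have hml : m ∣ l := hmin ▸ hper2.minimalPeriod_dvd
  have : l = m := le_antisymm hcm (Nat.le_of_dvd hlpos hml)
  exact ⟨hlpos, by rw [this]; exact hkm⟩

lemma aux_inj {i j : ℕ} (hi : i < tailLength σ a + cycleLength σ a)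
    (hj : j < tailLength σ a + cycleLength σ a) (h : σ^[i] a = σ^[j] a) : i = j := by
  rcases lt_trichotomy i j with h' | h' | h'
  · exfalso
    have ht : tailLength σ a ≤ i :=
      Nat.sInf_le ⟨j - i, by omega, by rw [show i + (j - i) = j by omega]; exact h.symm⟩
    have hc : cycleLength σ a ≤ j - i :=
      Nat.sInf_le ⟨by omega, i, by rw [show i + (j - i) = j by omega]; exact h.symm⟩
    omega
  · exact h'
  · exfalso
    have ht : tailLength σ a ≤ j :=
      Nat.sInf_le ⟨i - j, by omega, by rw [show j + (i - j) = i by omega]; exact h⟩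
    have hc : cycleLength σ a ≤ i - j :=
      Nat.sInf_le ⟨by omega, j, by rw [show j + (i - j) = i by omega]; exact h⟩
    omega

lemma aux_tail_not_per {i m : ℕ} (hi : i < tailLength σ a) (hm : 0 < m) :
    σ^[i + m] a ≠ σ^[i] a := by
  intro h
  have : tailLength σ a ≤ i := Nat.sInf_le ⟨m, hm, h⟩
  omega

lemma aux_cycle_per {i : ℕ} (hi : tailLength σ a ≤ i) :
    σ^[i + cycleLength σ a] a = σ^[i] a := by
  have := aux_shift σ a (aux_key σ a).2 (i - tailLength σ a)
  rwa [show tailLength σ a + (i - tailLength σ a) = i by omega] at this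

end Aux

lemma aux_ppow_dvd_lcm_pair {q m n : ℕ} (hq : IsPrimePow q) (h : q ∣ Nat.lcm m n) :
    q ∣ m ∨ q ∣ n := by
  rcases eq_or_ne m 0 with rfl | hm
  · exact Or.inl (dvd_zero q)
  rcases eq_or_ne n 0 with rfl | hn
  · exact Or.inr (dvd_zero q)
  obtain ⟨p, e, hp, he, rfl⟩ := hq
  have hp' : p.Prime := Nat.prime_iff.2 hp
  have hlcm : Nat.lcm m n ≠ 0 := Nat.lcm_ne_zero hm hn
  have := (Nat.Prime.pow_dvd_iff_le_factorization hp' hlcm).1 h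
  rw [Nat.factorization_lcm hm hn] at this
  simp only [Finsupp.sup_apply] at this
  rcases le_max_iff.1 this with h' | h'
  · exact Or.inl ((Nat.Prime.pow_dvd_iff_le_factorization hp' hm).2 h')
  · exact Or.inr ((Nat.Prime.pow_dvd_iff_le_factorization hp' hn).2 h')

lemma aux_ppow_dvd_lcm {ι : Type*} {s : Finset ι} (f : ι → ℕ) {q : ℕ} (hq : IsPrimePow q)
    (h : q ∣ s.lcm f) : ∃ i ∈ s, q ∣ f i := by
  classical
  induction s using Finset.induction_on with
  | empty =>
    simp only [Finset.lcm_empty] at h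
    exact absurd (Nat.le_of_dvd one_pos h) (by have := hq.one_lt; omega)
  | @insert b s hbs ih =>
    rw [Finset.lcm_insert] at h
    rcases aux_ppow_dvd_lcm_pair hq h with h' | h'
    · exact ⟨b, Finset.mem_insert_self b s, h'⟩
    · obtain ⟨i, hi, hqi⟩ := ih h'
      exact ⟨i, Finset.mem_insert_of_mem hi, hqi⟩

/-- `K + α(L) ≤ card F` where `K` is the preperiod length and
`L` the period of `σ`. -/
theorem stmt_6 {F : Type*} [Fintype F] [Nonempty F] (σ : F → F) :
    Finset.univ.sup (tailLength σ) + alpha (Finset.univ.lcm (cycleLength σ)) ≤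
      Fintype.card F := by
  classical
  set L := Finset.univ.lcm (cycleLength σ) with hL
  have hLne : L ≠ 0 := by
    rw [hL]
    intro h0
    rw [Finset.lcm_eq_zero_iff] at h0
    obtain ⟨b, -, hb⟩ := h0
    have := (aux_key σ b).1
    omega
  have h1mem : (1:ℕ) ∈ {m : ℕ | (m = 1 ∨ IsPrimePow m) ∧ m ∣ L} := ⟨Or.inl rfl, one_dvd L⟩
  have halpha : alpha L ∈ {m : ℕ | (m = 1 ∨ IsPrimePow m) ∧ m ∣ L} := by
    apply Nat.sSup_mem ⟨1, h1mem⟩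
    exact ⟨L, fun m hm => Nat.le_of_dvd (Nat.pos_of_ne_zero hLne) hm.2⟩
  obtain ⟨a, -, ha⟩ := Finset.exists_mem_eq_sup Finset.univ Finset.univ_nonempty (tailLength σ)
  set K := Finset.univ.sup (tailLength σ) with hK
  -- find b with alpha L ∣ cycleLength σ b
  obtain ⟨b, hb⟩ : ∃ b : F, alpha L ∣ cycleLength σ b := by
    rcases halpha.1 with h1 | hpp
    · exact ⟨a, h1 ▸ one_dvd _⟩
    · obtain ⟨b, -, hb⟩ := aux_ppow_dvd_lcm (cycleLength σ) hpp halpha.2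
      exact ⟨b, hb⟩
  have hαle : alpha L ≤ cycleLength σ b := Nat.le_of_dvd (aux_key σ b).1 hb
  set lb := cycleLength σ b with hlb
  set kb := tailLength σ b with hkb
  -- two disjoint finsets
  set S1 : Finset F := (Finset.range K).image (fun i => σ^[i] a) with hS1
  set S2 : Finset F := (Finset.range lb).image (fun t => σ^[kb + t] b) with hS2
  have hcard1 : S1.card = K := by
    rw [hS1, Finset.card_image_of_injOn, Finset.card_range]
    intro i hi j hj h
    simp only [Finset.coe_range, Set.mem_Iio] at hi hj
    exact aux_inj σ a (by have := (aux_key σ a).1; omega) (by have := (aux_key σ a).1; omega) h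
  have hcard2 : S2.card = lb := by
    rw [hS2, Finset.card_image_of_injOn, Finset.card_range]
    intro i hi j hj h
    simp only [Finset.coe_range, Set.mem_Iio] at hi hj
    have := aux_inj σ b (i := kb + i) (j := kb + j) (by omega) (by omega) h
    omega
  have hdisj : Disjoint S1 S2 := by
    rw [Finset.disjoint_left]
    intro x hx1 hx2
    simp only [hS1, hS2, Finset.mem_image, Finset.mem_range] at hx1 hx2
    obtain ⟨i, hi, rfl⟩ := hx1
    obtain ⟨t, ht, heq⟩ := hx2
    have hper : σ^[i + lb] a = σ^[i] a := by
      have h1 : σ^[kb + t + lb] b = σ^[kb + t] b := aux_cycle_per σ b (by omega)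
      calc σ^[i + lb] a = σ^[lb] (σ^[i] a) := by
            rw [← Function.iterate_add_apply, show lb + i = i + lb by ring]
        _ = σ^[lb] (σ^[kb + t] b) := by rw [heq]
        _ = σ^[kb + t + lb] b := by
            rw [← Function.iterate_add_apply, show lb + (kb + t) = kb + t + lb by ring]
        _ = σ^[kb + t] b := h1
        _ = σ^[i] a := heq
    exact aux_tail_not_per σ a (ha ▸ hi) (aux_key σ b).1 hper
  have hunion : (S1 ∪ S2).card = K + lb := by
    rw [Finset.card_union_of_disjoint hdisj, hcard1, hcard2]
  have : K + lb ≤ Fintype.card F := by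
    rw [← hunion, ← Finset.card_univ]
    exact Finset.card_le_card (Finset.subset_univ _)
  omega
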